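/- Let μ be a positive measure, α ∈ ℝ, and r₁ < ⋯ < r_n the roots of p_n + α p_{n−1} (monic orthogonal polynomials p_i for μ). For 0 ≤ j ≤ n−1, the signed measure dμ_j(t) = ∏_{i=0}^{j−1}(r_{n−i} − t) dμ(t) is positive definite up to degree n−j−1. -/

import Mathlib

open MeasureTheory Polynomial

/-- With `r₁ < ⋯ < r_n` the roots of `p_n + α p_{n-1}` (monic orthogonal polynomials for `μ`),
for `0 ≤ j ≤ n-1` the signed measure `dμ_j(t) = ∏_{i=0}^{j-1} (r_{n-i} - t) dμ(t)` is positive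
definite up to degree `n - j - 1`: `∫ f² dμ_j > 0` for nonzero `f` with `deg f ≤ n - j - 1`. -/
theorem stmt_10 (μ : Measure ℝ)
    (hint : ∀ q : Polynomial ℝ, Integrable (fun x => q.eval x) μ)
    (hpos : ∀ q : Polynomial ℝ, q ≠ 0 → 0 < ∫ x, (q.eval x) ^ 2 ∂μ)
    (p : ℕ → Polynomial ℝ) (hmonic : ∀ i, (p i).Monic) (hdeg : ∀ i, (p i).natDegree = i)
    (horth : ∀ i j, i ≠ j → ∫ x, (p i).eval x * (p j).eval x ∂μ = 0)
    (n : ℕ) (hn : 1 ≤ n) (α : ℝ) (r : ℕ → ℝ)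
    (hsort : ∀ i j, i < j → j < n → r i < r j)
    (hroots : p n + C α * p (n - 1) = ∏ i ∈ Finset.range n, (X - C (r i))) :
    ∀ j ≤ n - 1, ∀ q : Polynomial ℝ, q ≠ 0 → q.natDegree ≤ n - j - 1 →
      0 < ∫ x, (q ^ 2 * ∏ i ∈ Finset.range j, (C (r (n - 1 - i)) - X)).eval x ∂μ := by
  classical
  -- injectivity of the nodes
  have hinj : Set.InjOn r (Finset.range n) := by
    intro a ha b hb hab
    simp only [Finset.coe_range, Set.mem_Iio] at ha hb
    rcases lt_trichotomy a b with h | h | h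
    · exact absurd hab (ne_of_lt (hsort a b h hb))
    · exact h
    · exact absurd hab.symm (ne_of_lt (hsort b a h ha))
  -- integrability of products of polynomials
  have hint2 : ∀ a b : Polynomial ℝ, Integrable (fun x => a.eval x * b.eval x) μ := by
    intro a b
    simpa using hint (a * b)
  have hp0 : p 0 = 1 := (hmonic 0).natDegree_eq_zero.mp (hdeg 0)
  have hintp : ∀ m : ℕ, 0 < m → ∫ x, (p m).eval x ∂μ = 0 := by
    intro m hm
    have := horth 0 m (by omega)
    simpa [hp0] using this
  -- orthogonality of `p m` to all polynomials of lower degree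
  have horthd : ∀ d : ℕ, ∀ q : Polynomial ℝ, q.natDegree ≤ d → ∀ m, d < m →
      ∫ x, q.eval x * (p m).eval x ∂μ = 0 := by
    intro d
    induction d with
    | zero =>
      intro q hq m hm
      rw [eq_C_of_natDegree_le_zero hq]
      simp only [eval_C]
      rw [integral_const_mul _ _, hintp m hm, mul_zero]
    | succ d ih =>
      intro q hq m hm
      set c : ℝ := q.coeff (d + 1) with hc
      have hsub : (q - C c * p (d + 1)).natDegree ≤ d := by
        apply natDegree_le_iff_coeff_eq_zero.mpr
        intro N hN
        rcases eq_or_lt_of_le (Nat.succ_le_of_lt hN) with hN1 | hN1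
        · have hpc : (p (d + 1)).coeff (d + 1) = 1 := by
            have := (hmonic (d + 1)).coeff_natDegree
            rwa [hdeg (d + 1)] at this
          simp [← hN1, hpc, hc]
        · have h1 : q.coeff N = 0 := coeff_eq_zero_of_natDegree_lt (lt_of_le_of_lt hq hN1)
          have h2 : (p (d + 1)).coeff N = 0 :=
            coeff_eq_zero_of_natDegree_lt (by rw [hdeg]; exact hN1)
          simp [h1, h2]
      have key : ∀ x : ℝ, q.eval x * (p m).eval x
          = (q - C c * p (d + 1)).eval x * (p m).eval x
            + c * ((p (d + 1)).eval x * (p m).eval x) := by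
        intro x; simp only [eval_sub, eval_mul, eval_C]; ring
      calc ∫ x, q.eval x * (p m).eval x ∂μ
          = ∫ x, ((q - C c * p (d + 1)).eval x * (p m).eval x
              + c * ((p (d + 1)).eval x * (p m).eval x)) ∂μ := by simp_rw [key]
        _ = (∫ x, (q - C c * p (d + 1)).eval x * (p m).eval x ∂μ)
              + c * ∫ x, (p (d + 1)).eval x * (p m).eval x ∂μ := by
            rw [integral_add (hint2 _ _) ((hint2 _ _).const_mul c), integral_const_mul _ _]
        _ = 0 := by
            rw [ih _ hsub m (by omega), horth (d + 1) m (by omega)]; ring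
  have horthdeg : ∀ m : ℕ, ∀ q : Polynomial ℝ, q.degree < (m : WithBot ℕ) →
      ∫ x, q.eval x * (p m).eval x ∂μ = 0 := by
    intro m q hqm
    rcases eq_or_ne q 0 with rfl | hq0
    · simp
    · have hnd : q.natDegree < m := by
        have := hqm
        rwa [degree_eq_natDegree hq0, Nat.cast_lt] at this
      exact horthd q.natDegree q le_rfl m hnd
  -- the node polynomial
  set w : Polynomial ℝ := ∏ i ∈ Finset.range n, (X - C (r i)) with hwdef
  have hwp : w = p n + C α * p (n - 1) := hroots.symm
  have hwmonic : w.Monic := monic_prod_of_monic _ _ fun i _ => monic_X_sub_C _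
  have hwdeg : w.natDegree = n := by
    rw [hwdef, natDegree_prod _ _ fun i _ => X_sub_C_ne_zero (r i)]
    simp
  have hwdegree : w.degree = (n : WithBot ℕ) := by
    rw [degree_eq_natDegree hwmonic.ne_zero, hwdeg]
  have hweval : ∀ k ∈ Finset.range n, w.eval (r k) = 0 := by
    intro k hk
    rw [hwdef, eval_prod]
    apply Finset.prod_eq_zero hk
    simp
  -- quadrature weights
  set lam : ℕ → ℝ := fun k => ∫ x, (Lagrange.basis (Finset.range n) r k).eval x ∂μ with hlamdef
  -- the quadrature formula, exact for degree ≤ 2n-2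
  have hquad : ∀ h : Polynomial ℝ, h.natDegree ≤ 2 * n - 2 →
      ∫ x, h.eval x ∂μ = ∑ k ∈ Finset.range n, lam k * h.eval (r k) := by
    intro h hh
    set Q : Polynomial ℝ := h /ₘ w with hQdef
    set S : Polynomial ℝ := h %ₘ w with hSdef
    have hdecomp : S + w * Q = h := modByMonic_add_div h w
    have hIw : ∫ x, (w * Q).eval x ∂μ = 0 := by
      rcases eq_or_ne Q 0 with hQ0 | hQ0
      · simp [hQ0]
      · have hh0 : h ≠ 0 := by
          intro h0
          apply hQ0
          rw [hQdef, h0, zero_divByMonic]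
        have hge : ¬h.degree < w.degree := fun hlt =>
          hQ0 ((divByMonic_eq_zero_iff hwmonic).mpr hlt)
        have hnle : n ≤ h.natDegree := by
          have := le_of_not_gt hge
          rw [hwdegree, degree_eq_natDegree hh0, Nat.cast_le] at this
          exact this
        have hn2 : 2 ≤ n := by omega
        have hQnat : Q.natDegree = h.natDegree - n := by
          rw [hQdef, natDegree_divByMonic h hwmonic, hwdeg]
        have hQle : Q.natDegree ≤ n - 2 := by omega
        have hQn1 : Q.degree < ((n - 1 : ℕ) : WithBot ℕ) :=
          lt_of_le_of_lt degree_le_natDegree (by exact_mod_cast (by omega : Q.natDegree < n - 1))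
        have hQn : Q.degree < (n : WithBot ℕ) :=
          lt_of_le_of_lt degree_le_natDegree (by exact_mod_cast (by omega : Q.natDegree < n))
        have e : ∀ x : ℝ, (w * Q).eval x
            = Q.eval x * (p n).eval x + α * (Q.eval x * (p (n - 1)).eval x) := by
          intro x
          rw [hwp]
          simp only [eval_mul, eval_add, eval_C]
          ring
        simp_rw [e]
        rw [integral_add (hint2 _ _) ((hint2 _ _).const_mul α), integral_const_mul _ _,
          horthdeg n Q hQn, horthdeg (n - 1) Q hQn1]
        ring
    have hSdeg : S.degree < ((Finset.range n).card : WithBot ℕ) := by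
      rw [Finset.card_range]
      have := degree_modByMonic_lt h hwmonic
      rwa [hwdegree] at this
    have hSrep : S = Lagrange.interpolate (Finset.range n) r fun i => S.eval (r i) :=
      Lagrange.eq_interpolate hinj hSdeg
    have hIS : ∫ x, S.eval x ∂μ = ∑ k ∈ Finset.range n, lam k * S.eval (r k) := by
      conv_lhs => rw [hSrep, Lagrange.interpolate_apply]
      have e2 : ∀ x : ℝ,
          (∑ i ∈ Finset.range n, C (S.eval (r i)) * Lagrange.basis (Finset.range n) r i).eval x
          = ∑ i ∈ Finset.range n,
            S.eval (r i) * (Lagrange.basis (Finset.range n) r i).eval x := by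
        intro x
        rw [eval_finset_sum]
        simp
      simp_rw [e2]
      rw [integral_finset_sum _ fun k _ => (hint _).const_mul _]
      exact Finset.sum_congr rfl fun k hk => by rw [integral_const_mul _ _]; ring
    have heval : ∀ k ∈ Finset.range n, S.eval (r k) = h.eval (r k) := by
      intro k hk
      conv_rhs => rw [← hdecomp]
      simp [hweval k hk]
    have hsplit : ∫ x, h.eval x ∂μ = (∫ x, S.eval x ∂μ) + ∫ x, (w * Q).eval x ∂μ := by
      conv_lhs => rw [← hdecomp]
      simp_rw [eval_add]
      exact integral_add (hint S) (hint (w * Q))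
    rw [hsplit, hIw, add_zero, hIS]
    exact Finset.sum_congr rfl fun k hk => by rw [heval k hk]
  -- positivity of the weights
  have hlam : ∀ k ∈ Finset.range n, 0 < lam k := by
    intro k hk
    have hb : Lagrange.basis (Finset.range n) r k ≠ 0 := Lagrange.basis_ne_zero hinj hk
    have hdb : (Lagrange.basis (Finset.range n) r k).natDegree = n - 1 := by
      simpa using Lagrange.natDegree_basis hinj hk
    have h2 : ((Lagrange.basis (Finset.range n) r k) ^ 2).natDegree ≤ 2 * n - 2 := by
      rw [natDegree_pow, hdb]; omega
    have hposb : 0 < ∫ x, ((Lagrange.basis (Finset.range n) r k) ^ 2).eval x ∂μ := by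
      simpa [eval_pow] using hpos _ hb
    rw [hquad _ h2] at hposb
    have hsum : ∑ i ∈ Finset.range n,
        lam i * ((Lagrange.basis (Finset.range n) r k) ^ 2).eval (r i) = lam k := by
      rw [Finset.sum_eq_single_of_mem k hk]
      · simp [eval_pow, Lagrange.eval_basis_self hinj hk]
      · intro i hi hik
        simp [eval_pow, Lagrange.eval_basis_of_ne (Ne.symm hik) hi]
    rwa [hsum] at hposb
  -- main argument
  intro j hj q hq hqdeg
  set g : Polynomial ℝ := q ^ 2 * ∏ i ∈ Finset.range j, (C (r (n - 1 - i)) - X) with hg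
  have hgdeg : g.natDegree ≤ 2 * n - 2 := by
    have h1 : (q ^ 2).natDegree ≤ 2 * (n - j - 1) := by
      rw [natDegree_pow]; omega
    have h2 : (∏ i ∈ Finset.range j, (C (r (n - 1 - i)) - X)).natDegree ≤ j := by
      refine le_trans (natDegree_prod_le _ _) (le_of_eq ?_)
      rw [Finset.sum_congr rfl fun i _ => ?_, Finset.sum_const, Finset.card_range, smul_eq_mul,
        mul_one]
      rw [show C (r (n - 1 - i)) - X = -(X - C (r (n - 1 - i))) by ring, natDegree_neg,
        natDegree_X_sub_C]
    calc g.natDegree ≤ (q ^ 2).natDegree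
          + (∏ i ∈ Finset.range j, (C (r (n - 1 - i)) - X)).natDegree := natDegree_mul_le
      _ ≤ 2 * (n - j - 1) + j := add_le_add h1 h2
      _ ≤ 2 * n - 2 := by omega
  rw [hquad g hgdeg]
  have hval : ∀ k, g.eval (r k)
      = (q.eval (r k)) ^ 2 * ∏ i ∈ Finset.range j, (r (n - 1 - i) - r k) := by
    intro k
    simp [hg, eval_prod]
  have hprodpos : ∀ k, k < n - j → 0 < ∏ i ∈ Finset.range j, (r (n - 1 - i) - r k) := by
    intro k hk
    apply Finset.prod_pos
    intro i hi
    rw [Finset.mem_range] at hi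
    have hki : k < n - 1 - i := by omega
    have := hsort k (n - 1 - i) hki (by omega)
    linarith
  have hnonneg : ∀ k ∈ Finset.range n, 0 ≤ lam k * g.eval (r k) := by
    intro k hk
    rw [Finset.mem_range] at hk
    rcases lt_or_ge k (n - j) with hkn | hkn
    · have := hprodpos k hkn
      have hl := hlam k (Finset.mem_range.mpr hk)
      rw [hval k]
      positivity
    · have hz : g.eval (r k) = 0 := by
        rw [hval k]
        have hmem : n - 1 - k ∈ Finset.range j := Finset.mem_range.mpr (by omega)
        rw [Finset.prod_eq_zero hmem (by rw [show n - 1 - (n - 1 - k) = k by omega]; ring)]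
        ring
      simp [hz]
  have hex : ∃ k ∈ Finset.range n, 0 < lam k * g.eval (r k) := by
    have hkey : ∃ k, k < n - j ∧ q.eval (r k) ≠ 0 := by
      by_contra hall
      push_neg at hall
      have hsub : (Finset.range (n - j)).image r ⊆ q.roots.toFinset := by
        intro x hx
        simp only [Finset.mem_image, Finset.mem_range] at hx
        obtain ⟨k, hk, rfl⟩ := hx
        rw [Multiset.mem_toFinset, mem_roots hq]
        exact hall k hk
      have hinj' : Set.InjOn r (Finset.range (n - j)) :=
        hinj.mono (by intro x hx; simp only [Finset.coe_range, Set.mem_Iio] at *; omega)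
      have hcard : n - j ≤ q.roots.toFinset.card := by
        have := Finset.card_le_card hsub
        rwa [Finset.card_image_of_injOn hinj', Finset.card_range] at this
      have hle : q.roots.toFinset.card ≤ q.natDegree :=
        le_trans (Multiset.toFinset_card_le _) (Polynomial.card_roots' q)
      omega
    obtain ⟨k, hk, hqk⟩ := hkey
    refine ⟨k, Finset.mem_range.mpr (by omega), ?_⟩
    have hl := hlam k (Finset.mem_range.mpr (by omega))
    have hpp := hprodpos k hk
    have hsq : 0 < (q.eval (r k)) ^ 2 :=
      lt_of_le_of_ne (sq_nonneg _) (Ne.symm (pow_ne_zero 2 hqk))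
    rw [hval k]
    positivity
  exact Finset.sum_pos' hnonneg hex
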